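/- Let F ∈ D_a be entire with μ_n := −ln|a_n| strictly increasing, μ_n > 0 for all n, and ∑_n 1/(μ_{n+1} − μ_n) < +∞; let δ > 0 and let Δ_n be as defined, and set μ*_n := μ_n + Δ_n. Then the series f*(σ) = ∑_{n=0}^∞ e^{λ_n} e^{σ μ*_n} converges (absolutely) for every σ < 0 and diverges for every σ ≥ 0; i.e. f* converges exactly in the half-plane Re s < 0 and its abscissa of absolute convergence equals 0. -/

import Mathlib

open Filter

/-- `Del δ μ n` is `Δ_n := δ ∑_{j=0}^{n-1} (μ_{j+1} - μ_j)
    ∑_{m=j+1}^∞ ( 1/(μ_m − μ_{m−1}) + 1/(μ_{m+1} − μ_m) )`; in particular `Δ_0 = 0`. -/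
noncomputable def Del (δ : ℝ) (μ : ℕ → ℝ) (n : ℕ) : ℝ :=
  δ * ∑ j ∈ Finset.range n, (μ (j + 1) - μ j) *
    ∑' i : ℕ, (1 / (μ (j + 1 + i) - μ (j + i)) + 1 / (μ (j + 2 + i) - μ (j + 1 + i)))

/-- If `F ∈ D_a` is entire, `μ_n := −ln|a_n|` is positive and strictly increasing with
`∑ 1/(μ_{n+1}−μ_n) < ∞`, and `δ > 0`, then the Dirichlet series
`f*(σ) = ∑ e^{λ_n} e^{σ μ*_n}` with `μ*_n := μ_n + Δ_n` converges absolutely for every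
`σ < 0` and diverges for every `σ ≥ 0`: it converges exactly in the half-plane
`Re s < 0` and its abscissa of absolute convergence equals `0`. -/
theorem stmt_12 (a : ℕ → ℂ) (lam : ℕ → ℝ)
    (hdist : ∀ n m, n ≠ m → lam n ≠ lam m)
    (hlam0 : ∀ n, 0 ≤ lam n)
    (hlamsup : ∀ n, ∃ m, lam n < lam m)
    (hentire : ∀ x : ℝ, Summable fun n => ‖a n‖ * Real.exp (x * lam n))
    (hne : ∀ n, a n ≠ 0) (n0 : ℕ)
    (hdec : ∀ n ≥ n0, ‖a (n + 1)‖ < ‖a n‖)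
    (hto0 : Tendsto (fun n => ‖a n‖) atTop (nhds 0))
    (μ : ℕ → ℝ) (hμ : ∀ n, μ n = -Real.log (‖a n‖))
    (hμpos : ∀ n, 0 < μ n) (hμmono : StrictMono μ)
    (hsum : Summable fun n => 1 / (μ (n + 1) - μ n))
    (δ : ℝ) (hδ : 0 < δ) :
    (∀ σ : ℝ, σ < 0 →
      Summable fun n => Real.exp (lam n) * Real.exp (σ * (μ n + Del δ μ n))) ∧
    (∀ σ : ℝ, 0 ≤ σ →
      ¬ Summable fun n => Real.exp (lam n) * Real.exp (σ * (μ n + Del δ μ n))) := by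

  have habs : ∀ n, ‖a n‖ = Real.exp (-(μ n)) := by
    intro n
    rw [hμ, neg_neg, Real.exp_log (norm_pos_iff.mpr (hne n))]
  have hDel : ∀ n, 0 ≤ Del δ μ n := by
    intro n
    apply mul_nonneg hδ.le
    apply Finset.sum_nonneg
    intro j _
    apply mul_nonneg (sub_nonneg.mpr (hμmono.monotone (Nat.le_succ j)))
    apply tsum_nonneg
    intro i
    have h1 : 0 ≤ μ (j+1+i) - μ (j+i) := sub_nonneg.mpr (hμmono.monotone (by omega))
    have h2 : 0 ≤ μ (j+2+i) - μ (j+1+i) := sub_nonneg.mpr (hμmono.monotone (by omega))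
    positivity
  constructor
  · intro σ hσ
    obtain ⟨c, hc⟩ : ∃ c : ℝ, c = -σ := ⟨-σ, rfl⟩
    have hcpos : 0 < c := by rw [hc]; linarith
    have hsum2 : Summable fun n => Real.exp ((2/c) * lam n - μ n) := by
      refine (hentire (2/c)).congr fun n => ?_
      rw [habs n, ← Real.exp_add]
      congr 1
      ring
    have hev1 : ∀ᶠ n in atTop, lam n ≤ (c/2) * μ n := by
      have h0 := hsum2.tendsto_atTop_zero
      have h1 : ∀ᶠ n in atTop, Real.exp ((2/c) * lam n - μ n) < 1 :=
        h0.eventually (gt_mem_nhds one_pos)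
      filter_upwards [h1] with n hn
      have h2 : (2/c) * lam n - μ n < 0 := by
        by_contra hcon
        push_neg at hcon
        exact absurd hn (not_lt.mpr (Real.one_le_exp hcon))
      have h3 : 2 * lam n < c * μ n := by
        have := mul_lt_mul_of_pos_left (show (2/c) * lam n < μ n by linarith) hcpos
        calc 2 * lam n = c * ((2/c) * lam n) := by field_simp
        _ < c * μ n := this
      nlinarith
    have hev2 : ∀ᶠ n in atTop, 4/c ≤ μ (n+1) - μ n := by
      have h0 := hsum.tendsto_atTop_zero
      have h1 : ∀ᶠ n in atTop, 1/(μ (n+1) - μ n) < c/4 :=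
        h0.eventually (gt_mem_nhds (by positivity))
      filter_upwards [h1] with n hn
      have hg : 0 < μ (n+1) - μ n := sub_pos.mpr (hμmono (Nat.lt_succ_self n))
      rw [div_lt_iff₀ hg] at hn
      rw [div_le_iff₀ hcpos]
      nlinarith
    have hs : Summable fun n => Real.exp (-(c/2) * μ n) := by
      apply summable_of_ratio_norm_eventually_le (r := Real.exp (-2))
        (by rw [Real.exp_lt_one_iff]; norm_num)
      filter_upwards [hev2] with n hn
      rw [Real.norm_eq_abs, Real.norm_eq_abs, Real.abs_exp, Real.abs_exp,
        ← Real.exp_add, Real.exp_le_exp]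
      have h4 : 4 ≤ c * (μ (n+1) - μ n) := by
        have := mul_le_mul_of_nonneg_left hn hcpos.le
        calc (4:ℝ) = c * (4/c) := by field_simp
        _ ≤ c * (μ (n+1) - μ n) := this
      nlinarith
    have hev : ∀ᶠ n in atTop,
        Real.exp (lam n) * Real.exp (σ * (μ n + Del δ μ n)) ≤ Real.exp (-(c/2) * μ n) := by
      filter_upwards [hev1] with n hn
      rw [← Real.exp_add, Real.exp_le_exp]
      have h1 : σ * Del δ μ n ≤ 0 := mul_nonpos_iff.mpr (Or.inr ⟨hσ.le, hDel n⟩)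
      have hσc : σ = -c := by rw [hc]; ring
      nlinarith [hμpos n]
    obtain ⟨N, hN⟩ := eventually_atTop.mp hev
    rw [← summable_nat_add_iff N]
    exact Summable.of_nonneg_of_le (fun n => by positivity)
      (fun n => hN (n+N) (Nat.le_add_left N n)) ((summable_nat_add_iff N).mpr hs)
  · intro σ hσ h
    have h0 := h.tendsto_atTop_zero
    have h1 : ∀ᶠ n in atTop,
        Real.exp (lam n) * Real.exp (σ * (μ n + Del δ μ n)) < 1 :=
      h0.eventually (gt_mem_nhds one_pos)
    obtain ⟨n, hn⟩ := h1.exists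
    have h2 : 1 ≤ Real.exp (lam n) := Real.one_le_exp (hlam0 n)
    have h3 : 1 ≤ Real.exp (σ * (μ n + Del δ μ n)) :=
      Real.one_le_exp (mul_nonneg hσ (by nlinarith [hμpos n, hDel n]))
    nlinarith
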